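/- Let f : ℝⁿ → ℝ be path-differentiable, φ a C² Legendre function with ∇²φ(x) ⪰ μI on C (μ > 0), and let z : [0,∞) → 𝓜 ∩ C be an absolutely continuous solution of the differential inclusion (d/dt)∇φ(z(t)) ∈ -∂f(z(t)) + N_{z(t)}𝓜 with ż(t) ∈ T_{z(t)}𝓜 a.e. Then for all t ≥ 0: f(z(t)) - f(z(0)) = -∫₀ᵗ ⟨∇²φ(z(s))ż(s), ż(s)⟩ ds ≤ -μ∫₀ᵗ‖ż(s)‖² ds ≤ 0. Moreover, if f(z(t)) = f(z(0)) for all t ≥ 0, then z is constant and 0 ∈ P_{T_{z(0)}𝓜}(∇²φ(z(0))⁻¹∂f(z(0))). -/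

import Mathlib

open Matrix Filter Topology MeasureTheory intervalIntegral

noncomputable def gradVec {n : ℕ} (φ : (Fin n → ℝ) → ℝ) (x : Fin n → ℝ) : Fin n → ℝ :=
  fun i => fderiv ℝ φ x (Pi.single i 1)

noncomputable def hessMat {n : ℕ} (φ : (Fin n → ℝ) → ℝ) (x : Fin n → ℝ) :
    Matrix (Fin n) (Fin n) ℝ :=
  fun i j => iteratedFDeriv ℝ 2 φ x ![Pi.single i 1, Pi.single j 1]

section helpers

open Set

variable {n : ℕ}

lemma dot_self_nonneg' (v : Fin n → ℝ) : 0 ≤ v ⬝ᵥ v :=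
  Finset.sum_nonneg fun _ _ => mul_self_nonneg _

lemma clm_apply_eq_sum (A : (Fin n → ℝ) →L[ℝ] ℝ) (v : Fin n → ℝ) :
    A v = ∑ j, v j * A (Pi.single j 1) := by
  conv_lhs => rw [← Finset.univ_sum_single v, map_sum]
  refine Finset.sum_congr rfl fun j _ => ?_
  have h : Pi.single j (v j) = v j • (Pi.single j 1 : Fin n → ℝ) := by
    rw [← Pi.single_smul, smul_eq_mul, mul_one]
  rw [h, A.map_smul, smul_eq_mul]

lemma hessL {C : Set (Fin n → ℝ)} (hCopen : IsOpen C) {φ : (Fin n → ℝ) → ℝ}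
    (hφ : ContDiffOn ℝ 2 φ C) {x : Fin n → ℝ} (hx : x ∈ C) :
    ∃ L : (Fin n → ℝ) →L[ℝ] ((Fin n → ℝ) →L[ℝ] ℝ),
      HasFDerivAt (fderiv ℝ φ) L x ∧
      (∀ i j, hessMat φ x i j = L (Pi.single i 1) (Pi.single j 1)) ∧
      (∀ u v, L u v = L v u) := by
  have hat : ContDiffAt ℝ 2 φ x := hφ.contDiffAt (hCopen.mem_nhds hx)
  refine ⟨fderiv ℝ (fderiv ℝ φ) x, ?_, ?_, ?_⟩
  · exact ((hat.fderiv_right (m := 1) (by norm_num)).differentiableAt one_ne_zero).hasFDerivAt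
  · intro i j
    show iteratedFDeriv ℝ 2 φ x ![Pi.single i 1, Pi.single j 1] = _
    rw [iteratedFDeriv_two_apply]
    simp
  · exact hat.isSymmSndFDerivAt (by norm_num)

lemma mulVec_dot_eq (H : Matrix (Fin n) (Fin n) ℝ)
    (L : (Fin n → ℝ) →L[ℝ] ((Fin n → ℝ) →L[ℝ] ℝ))
    (hH : ∀ i j, H i j = L (Pi.single i 1) (Pi.single j 1)) (v : Fin n → ℝ) :
    (H *ᵥ v) ⬝ᵥ v = L v v := by
  have h1 : L v v = ∑ i, v i * L (Pi.single i 1) v := by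
    have := clm_apply_eq_sum (L.flip v) v
    simpa [ContinuousLinearMap.flip_apply] using this
  have h2 : ∀ i, L (Pi.single i 1) v = ∑ j, v j * H i j := by
    intro i
    rw [clm_apply_eq_sum (L (Pi.single i 1)) v]
    exact Finset.sum_congr rfl fun j _ => by rw [hH]
  rw [h1]
  simp only [h2, dotProduct, Matrix.mulVec, Finset.sum_mul, Finset.mul_sum]
  exact Finset.sum_congr rfl fun i _ => Finset.sum_congr rfl fun j _ => by ring

lemma symm_mulVec_dot (H : Matrix (Fin n) (Fin n) ℝ) (hs : ∀ i j, H i j = H j i)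
    (a b : Fin n → ℝ) : (H *ᵥ a) ⬝ᵥ b = (H *ᵥ b) ⬝ᵥ a := by
  simp only [dotProduct, Matrix.mulVec, Finset.sum_mul]
  rw [Finset.sum_comm]
  refine Finset.sum_congr rfl fun i _ => Finset.sum_congr rfl fun j _ => ?_
  rw [hs i j]; ring

theorem ae_hasDerivAt_int {E : Type*} [NormedAddCommGroup E] [NormedSpace ℝ E]
    [CompleteSpace E] (f : ℝ → E) (hf : LocallyIntegrable f volume) :
    ∀ᵐ x : ℝ, HasDerivAt (fun u => ∫ s in (0:ℝ)..u, f s) (f x) x := by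
  have hii : ∀ a b : ℝ, IntervalIntegrable f volume a b := fun a b =>
    (hf.integrableOn_isCompact isCompact_uIcc).intervalIntegrable
  filter_upwards [(IsUnifLocDoublingMeasure.vitaliFamily (volume : Measure ℝ)
    1).ae_tendsto_average hf] with x hx
  have hR := hx.comp (Real.tendsto_Icc_vitaliFamily_right x)
  have hL := hx.comp (Real.tendsto_Icc_vitaliFamily_left x)
  rw [hasDerivAt_iff_tendsto_slope]
  rw [← nhdsLT_sup_nhdsGT, tendsto_sup]
  constructor
  · apply hL.congr'
    filter_upwards [self_mem_nhdsWithin] with y (hy : y < x)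
    have hylt : y < x := hy
    have : slope (fun u => ∫ s in (0:ℝ)..u, f s) x y
        = ⨍ s in Icc y x, f s := by
      rw [slope_def_module, setAverage_eq]
      have h1 : (∫ s in (0:ℝ)..y, f s) - (∫ s in (0:ℝ)..x, f s)
          = -∫ s in y..x, f s := by
        rw [← intervalIntegral.integral_add_adjacent_intervals (hii 0 y) (hii y x)]
        abel
      simp only [h1, Real.volume_Icc]
      rw [intervalIntegral.integral_of_le hylt.le,
        ← MeasureTheory.integral_Icc_eq_integral_Ioc,
        Real.volume_real_Icc_of_le hylt.le]
      rw [smul_neg, ← neg_smul]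
      congr 1
      rw [← inv_neg, neg_sub]
    rw [this]
    exact rfl
  · apply hR.congr'
    filter_upwards [self_mem_nhdsWithin] with y (hy : x < y)
    have : slope (fun u => ∫ s in (0:ℝ)..u, f s) x y
        = ⨍ s in Icc x y, f s := by
      rw [slope_def_module, setAverage_eq]
      have h1 : (∫ s in (0:ℝ)..y, f s) - (∫ s in (0:ℝ)..x, f s)
          = ∫ s in x..y, f s := by
        rw [← intervalIntegral.integral_add_adjacent_intervals (hii 0 x) (hii x y)]
        abel
      simp only [h1, Real.volume_Icc]
      rw [intervalIntegral.integral_of_le hy.le,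
        ← MeasureTheory.integral_Icc_eq_integral_Ioc,
        Real.volume_real_Icc_of_le hy.le]
    rw [this]
    exact rfl

lemma ae_hasDerivAt_curve (z z' : ℝ → Fin n → ℝ)
    (hzint : ∀ t : ℝ, 0 ≤ t → IntervalIntegrable z' volume 0 t ∧
      z t = z 0 + ∫ s in (0:ℝ)..t, z' s) :
    ∀ᵐ x : ℝ, 0 < x → HasDerivAt z (z' x) x := by
  set F : ℝ → Fin n → ℝ := Set.indicator (Set.Ici (0:ℝ)) z' with hF
  have hFloc : LocallyIntegrable F volume := by
    rw [locallyIntegrable_iff]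
    intro k hk
    obtain ⟨A, hA⟩ := hk.isBounded.subset_closedBall 0
    have hA0 : 0 ≤ max A 0 := le_max_right _ _
    have hsub : k ⊆ Icc (-(max A 0)) (max A 0) := by
      intro x hx
      have := hA hx
      rw [Real.closedBall_eq_Icc] at this
      simp only [zero_sub, zero_add] at this
      exact ⟨le_trans (by simp [neg_le_neg (le_max_left A 0)]) this.1,
        le_trans this.2 (le_max_left A 0)⟩
    refine IntegrableOn.mono_set ?_ hsub
    rw [IntegrableOn, hF, integrable_indicator_iff measurableSet_Ici]
    rw [IntegrableOn, Measure.restrict_restrict measurableSet_Ici]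
    have hset : Ici (0:ℝ) ∩ Icc (-(max A 0)) (max A 0) = Icc 0 (max A 0) := by
      ext x
      simp only [mem_inter_iff, mem_Ici, mem_Icc]
      constructor
      · rintro ⟨h1, _, h3⟩; exact ⟨h1, h3⟩
      · rintro ⟨h1, h2⟩; exact ⟨h1, by linarith, h2⟩
    rw [hset, ← IntegrableOn, integrableOn_Icc_iff_integrableOn_Ioc]
    exact (intervalIntegrable_iff_integrableOn_Ioc_of_le hA0).mp ((hzint _ hA0).1)
  filter_upwards [ae_hasDerivAt_int F hFloc] with x hx hxpos
  have heq : ∀ s ∈ Ioi (0:ℝ), z s = z 0 + ∫ u in (0:ℝ)..s, F u := by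
    intro s hs
    rw [(hzint s (le_of_lt hs)).2]
    congr 1
    refine (intervalIntegral.integral_congr fun u hu => ?_)
    rw [uIcc_of_le (le_of_lt hs)] at hu
    exact (Set.indicator_of_mem (Set.mem_Ici.mpr hu.1) z').symm
  have h1 : HasDerivAt (fun u => z 0 + ∫ s in (0:ℝ)..u, F s) (F x) x := hx.const_add _
  have h2 : HasDerivAt z (F x) x := by
    refine h1.congr_of_eventuallyEq ?_
    filter_upwards [isOpen_Ioi.mem_nhds hxpos] with s hs using (heq s hs)
  rwa [show F x = z' x from Set.indicator_of_mem (Set.mem_Ici.mpr hxpos.le) z'] at h2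

end helpers


/-- Along a solution `z` of `(d/dt)∇φ(z(t)) ∈ -∂f(z(t)) + N_{z(t)}𝓜` with
`ż(t) ∈ T_{z(t)}𝓜` a.e. and `∇²φ ⪰ μI` on `C`, one has
`f(z(t)) - f(z(0)) = -∫₀ᵗ ⟨∇²φ(z)ż, ż⟩ ≤ -μ∫₀ᵗ‖ż‖² ≤ 0`; and if `f∘z` is constant
then `z` is constant and `0 ∈ P_{T_{z(0)}𝓜}(∇²φ(z(0))⁻¹ ∂f(z(0)))`. -/
theorem stmt15 {n : ℕ} (C Mset : Set (Fin n → ℝ)) (hCopen : IsOpen C)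
    (φ : (Fin n → ℝ) → ℝ) (hφ : ContDiffOn ℝ 2 φ C) (μ : ℝ) (hμ : 0 < μ)
    (hlower : ∀ x ∈ C, ∀ w : Fin n → ℝ, μ * (w ⬝ᵥ w) ≤ (hessMat φ x *ᵥ w) ⬝ᵥ w)
    (f : (Fin n → ℝ) → ℝ) (D : (Fin n → ℝ) → Set (Fin n → ℝ))
    (T : (Fin n → ℝ) → Submodule ℝ (Fin n → ℝ))
    (z z' : ℝ → Fin n → ℝ)
    (hzmem : ∀ t : ℝ, 0 ≤ t → z t ∈ Mset ∩ C)
    (hzint : ∀ t : ℝ, 0 ≤ t → IntervalIntegrable z' volume 0 t ∧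
      z t = z 0 + ∫ s in (0:ℝ)..t, z' s)
    (htan : ∀ᵐ t : ℝ, 0 ≤ t → z' t ∈ T (z t))
    (hDI : ∀ᵐ t : ℝ, 0 ≤ t → ∃ d ∈ D (z t), ∃ w : Fin n → ℝ,
      (∀ u ∈ T (z t), w ⬝ᵥ u = 0) ∧
      HasDerivAt (fun s => gradVec φ (z s)) (-d + w) t)
    -- path-differentiability of `f` along the curve `z`:
    (hpath : ∃ g : ℝ → ℝ, (∀ᵐ s : ℝ, 0 ≤ s → ∀ d ∈ D (z s), g s = d ⬝ᵥ z' s) ∧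
      ∀ t : ℝ, 0 ≤ t → IntervalIntegrable g volume 0 t ∧
        f (z t) = f (z 0) + ∫ s in (0:ℝ)..t, g s)
    (hint1 : ∀ t : ℝ, 0 ≤ t →
      IntervalIntegrable (fun s => (hessMat φ (z s) *ᵥ z' s) ⬝ᵥ z' s) volume 0 t)
    (hint2 : ∀ t : ℝ, 0 ≤ t →
      IntervalIntegrable (fun s => z' s ⬝ᵥ z' s) volume 0 t) :
    (∀ t : ℝ, 0 ≤ t →
      f (z t) - f (z 0) = -∫ s in (0:ℝ)..t, (hessMat φ (z s) *ᵥ z' s) ⬝ᵥ z' s ∧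
      (-∫ s in (0:ℝ)..t, (hessMat φ (z s) *ᵥ z' s) ⬝ᵥ z' s) ≤
        -μ * ∫ s in (0:ℝ)..t, z' s ⬝ᵥ z' s ∧
      (-μ * ∫ s in (0:ℝ)..t, z' s ⬝ᵥ z' s) ≤ 0) ∧
    ((∀ t : ℝ, 0 ≤ t → f (z t) = f (z 0)) →
      (∀ t : ℝ, 0 ≤ t → z t = z 0) ∧
      ∃ d ∈ D (z 0), ∀ p ∈ T (z 0),
        (hessMat φ (z 0) *ᵥ ((hessMat φ (z 0))⁻¹ *ᵥ d)) ⬝ᵥ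
            ((hessMat φ (z 0))⁻¹ *ᵥ d) ≤
        (hessMat φ (z 0) *ᵥ (p - (hessMat φ (z 0))⁻¹ *ᵥ d)) ⬝ᵥ
            (p - (hessMat φ (z 0))⁻¹ *ᵥ d)) := by
  obtain ⟨g, hg1, hg2⟩ := hpath
  have hz'ae := ae_hasDerivAt_curve z z' hzint
  have hkey : ∀ᵐ s : ℝ, 0 < s → g s = -((hessMat φ (z s) *ᵥ z' s) ⬝ᵥ z' s) := by
    filter_upwards [hz'ae, hDI, hg1, htan] with t h1 h2 h3 h4 ht
    obtain ⟨d, hd, w, hw, hder⟩ := h2 ht.le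
    obtain ⟨L, hL, hHL, hsym⟩ := hessL hCopen hφ (hzmem t ht.le).2
    have hz't := h1 ht
    have hc1 : HasDerivAt (fun s => fderiv ℝ φ (z s)) (L (z' t)) t :=
      hL.comp_hasDerivAt t hz't
    let π : ((Fin n → ℝ) →L[ℝ] ℝ) →L[ℝ] (Fin n → ℝ) :=
      ContinuousLinearMap.pi fun i => ContinuousLinearMap.apply ℝ ℝ (Pi.single i 1)
    have hc2 : HasDerivAt (fun s => gradVec φ (z s)) (π (L (z' t))) t :=
      π.hasFDerivAt.comp_hasDerivAt t hc1
    have huniq : -d + w = π (L (z' t)) := hder.unique hc2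
    have hdi : ∀ i, d i = w i - L (z' t) (Pi.single i 1) := by
      intro i
      have h := congrFun huniq i
      have hπ : π (L (z' t)) i = L (z' t) (Pi.single i 1) := rfl
      rw [hπ] at h
      simp only [Pi.add_apply, Pi.neg_apply] at h
      linarith
    have hwz : w ⬝ᵥ z' t = 0 := hw _ (h4 ht.le)
    rw [h3 ht.le d hd]
    have hmd : (hessMat φ (z t) *ᵥ z' t) ⬝ᵥ z' t = L (z' t) (z' t) :=
      mulVec_dot_eq _ L hHL _
    have hsum : d ⬝ᵥ z' t = w ⬝ᵥ z' t - L (z' t) (z' t) := by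
      rw [clm_apply_eq_sum (L (z' t)) (z' t)]
      simp only [dotProduct, hdi]
      rw [← Finset.sum_sub_distrib]
      exact Finset.sum_congr rfl fun i _ => by ring
    rw [hsum, hwz, hmd]; ring
  have part1 : ∀ t : ℝ, 0 ≤ t →
      f (z t) - f (z 0) = -∫ s in (0:ℝ)..t, (hessMat φ (z s) *ᵥ z' s) ⬝ᵥ z' s ∧
      (-∫ s in (0:ℝ)..t, (hessMat φ (z s) *ᵥ z' s) ⬝ᵥ z' s) ≤
        -μ * ∫ s in (0:ℝ)..t, z' s ⬝ᵥ z' s ∧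
      (-μ * ∫ s in (0:ℝ)..t, z' s ⬝ᵥ z' s) ≤ 0 := by
    intro t ht
    have e1 : f (z t) - f (z 0) = ∫ s in (0:ℝ)..t, g s := by
      rw [(hg2 t ht).2]; ring
    have e2 : ∫ s in (0:ℝ)..t, g s
        = ∫ s in (0:ℝ)..t, -((hessMat φ (z s) *ᵥ z' s) ⬝ᵥ z' s) := by
      refine intervalIntegral.integral_congr_ae ?_
      filter_upwards [hkey] with s hs hmem
      rw [Set.uIoc_of_le ht] at hmem
      exact hs hmem.1
    have hnn : 0 ≤ ∫ s in (0:ℝ)..t, z' s ⬝ᵥ z' s :=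
      intervalIntegral.integral_nonneg ht fun u _ => dot_self_nonneg' (z' u)
    have hmono : μ * ∫ s in (0:ℝ)..t, z' s ⬝ᵥ z' s
        ≤ ∫ s in (0:ℝ)..t, (hessMat φ (z s) *ᵥ z' s) ⬝ᵥ z' s := by
      rw [← intervalIntegral.integral_const_mul]
      refine intervalIntegral.integral_mono_on ht ((hint2 t ht).const_mul μ)
        (hint1 t ht) ?_
      intro x hx
      exact hlower (z x) (hzmem x hx.1).2 (z' x)
    refine ⟨by rw [e1, e2, intervalIntegral.integral_neg], by linarith, by nlinarith⟩
  refine ⟨part1, ?_⟩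
  intro hcst
  have hI0 : ∀ t : ℝ, 0 ≤ t → ∫ s in (0:ℝ)..t, z' s ⬝ᵥ z' s = 0 := by
    intro t ht
    obtain ⟨p1, p2, p3⟩ := part1 t ht
    rw [hcst t ht, sub_self] at p1
    have hnn : 0 ≤ ∫ s in (0:ℝ)..t, z' s ⬝ᵥ z' s :=
      intervalIntegral.integral_nonneg ht fun u _ => dot_self_nonneg' (z' u)
    nlinarith
  have haez : ∀ᵐ s : ℝ, 0 < s → z' s = 0 := by
    have hN : ∀ N : ℕ, ∀ᵐ s : ℝ, s ∈ Set.Ioc (0:ℝ) (N:ℝ) → z' s ⬝ᵥ z' s = 0 := by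
      intro N
      have hNn : (0:ℝ) ≤ N := N.cast_nonneg
      have hint : IntegrableOn (fun s => z' s ⬝ᵥ z' s) (Set.Ioc (0:ℝ) N) volume :=
        (hint2 N hNn).1
      have h0 : ∫ s in Set.Ioc (0:ℝ) (N:ℝ), z' s ⬝ᵥ z' s = 0 := by
        rw [← intervalIntegral.integral_of_le hNn]; exact hI0 N hNn
      have hzq := (MeasureTheory.integral_eq_zero_iff_of_nonneg
        (fun s => dot_self_nonneg' (z' s)) hint).mp h0
      exact (ae_restrict_iff' measurableSet_Ioc).mp hzq
    rw [← ae_all_iff] at hN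
    filter_upwards [hN] with s hs hspos
    exact dotProduct_self_eq_zero.mp (hs ⌈s⌉₊ ⟨hspos, Nat.le_ceil s⟩)
  have hzero : ∀ t : ℝ, 0 ≤ t → z t = z 0 := by
    intro t ht
    rw [(hzint t ht).2]
    have h0 : ∫ s in (0:ℝ)..t, z' s = (0 : Fin n → ℝ) := by
      rw [intervalIntegral.integral_congr_ae (g := fun _ => (0 : Fin n → ℝ)) ?_]
      · exact intervalIntegral.integral_zero
      · filter_upwards [haez] with s hs hmem
        rw [Set.uIoc_of_le ht] at hmem
        exact hs hmem.1
    rw [h0, add_zero]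
  refine ⟨hzero, ?_⟩
  obtain ⟨t₀, ht₀, hP⟩ : ∃ t₀ : ℝ, 0 < t₀ ∧ (0 ≤ t₀ → ∃ d ∈ D (z t₀),
      ∃ w : Fin n → ℝ, (∀ u ∈ T (z t₀), w ⬝ᵥ u = 0) ∧
      HasDerivAt (fun s => gradVec φ (z s)) (-d + w) t₀) := by
    by_contra hcon
    push_neg at hcon
    have h2 : ∀ᵐ t : ℝ, t ∉ Set.Ioi (0:ℝ) := by
      filter_upwards [hDI] with t htP htmem
      obtain ⟨d, hd, w, hw, hder⟩ := htP (le_of_lt htmem)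
      exact (hcon t htmem).2 d hd w hw hder
    have h3 : volume (Set.Ioi (0:ℝ)) = 0 := by
      rw [← MeasureTheory.measure_eq_zero_iff_ae_notMem] at h2
      exact h2
    rw [Real.volume_Ioi] at h3
    exact ENNReal.top_ne_zero h3
  obtain ⟨d, hd, w, hw, hder⟩ := hP ht₀.le
  have hz0 : z t₀ = z 0 := hzero t₀ ht₀.le
  rw [hz0] at hd hw
  have hder0 : HasDerivAt (fun s => gradVec φ (z s)) 0 t₀ := by
    refine (hasDerivAt_const t₀ (gradVec φ (z 0))).congr_of_eventuallyEq ?_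
    filter_upwards [isOpen_Ioi.mem_nhds ht₀] with s hs
    rw [hzero s (le_of_lt hs)]
  have hdw : d = w := by
    have h := hder.unique hder0
    funext i
    have := congrFun h i
    simp only [Pi.add_apply, Pi.neg_apply, Pi.zero_apply] at this
    linarith
  have hdT : ∀ u ∈ T (z 0), d ⬝ᵥ u = 0 := by rw [hdw]; exact hw
  refine ⟨d, hd, ?_⟩
  intro p hp
  obtain ⟨L, hL, hHL, hsym⟩ := hessL hCopen hφ (hzmem 0 le_rfl).2
  set H := hessMat φ (z 0) with hHdef
  have hsymm : ∀ i j, H i j = H j i := fun i j => by rw [hHL, hHL, hsym]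
  have hpd : H.PosDef := by
    rw [Matrix.posDef_iff_dotProduct_mulVec]
    constructor
    · ext i j
      rw [Matrix.conjTranspose_apply]
      simp only [star_trivial]
      exact hsymm j i
    · intro x hx
      have h1 := hlower (z 0) (hzmem 0 le_rfl).2 x
      have h2 : 0 < x ⬝ᵥ x :=
        lt_of_le_of_ne (dot_self_nonneg' x)
          (fun h => hx (dotProduct_self_eq_zero.mp h.symm))
      have hst : (star x : Fin n → ℝ) = x := by simp
      rw [hst, dotProduct_comm]
      nlinarith
  have hunit : IsUnit H.det := hpd.det_pos.ne'.isUnit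
  have hHq : H *ᵥ (H⁻¹ *ᵥ d) = d := by
    rw [Matrix.mulVec_mulVec, Matrix.mul_nonsing_inv _ hunit, Matrix.one_mulVec]
  set q := H⁻¹ *ᵥ d with hq
  have hqp : (H *ᵥ q) ⬝ᵥ p = 0 := by rw [hHq]; exact hdT p hp
  have hpq : (H *ᵥ p) ⬝ᵥ q = 0 := by rw [symm_mulVec_dot H hsymm p q]; exact hqp
  have hexp : (H *ᵥ (p - q)) ⬝ᵥ (p - q)
      = (H *ᵥ p) ⬝ᵥ p - (H *ᵥ p) ⬝ᵥ q - (H *ᵥ q) ⬝ᵥ p + (H *ᵥ q) ⬝ᵥ q := by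
    rw [Matrix.mulVec_sub]
    simp only [sub_dotProduct, dotProduct_sub]
    ring
  have hpp : 0 ≤ (H *ᵥ p) ⬝ᵥ p := by
    have := hlower (z 0) (hzmem 0 le_rfl).2 p
    nlinarith [dot_self_nonneg' p]
  rw [hexp]
  linarith
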